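/- Let p: ℝ³ → ℂ be defined by p(a,b,c) = (b²−4ac)^{k−1/2} · ((a|z|² + bx + c)/y) / (az² + bz + c)^{k+1} when b² − 4ac > 0, and p(a,b,c) = 0 when b² − 4ac ≤ 0, where z = x + iy ∈ ℍ is fixed and k > 2 is an even integer. Then p satisfies the Vignéras differential equation (E − Δ^{(A)}/(4π)) p = (k−1) p on the open set {(a,b,c) : b² − 4ac > 0}, where E = a∂_a + b∂_b + c∂_c and Δ^{(A)} = −(1/2)∂_a∂_c + (1/2)∂²_b. -/

import Mathlib

open Complex Real
open Filter Topology

/-- Vignéras' test function `p(a,b,c)` attached to a fixed `z ∈ ℍ` and weight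
parameter `k`. -/
noncomputable def pVig (k : ℕ) (z : ℂ) (v : ℝ × ℝ × ℝ) : ℂ :=
  if 0 < v.2.1 ^ 2 - 4 * v.1 * v.2.2 then
    (((v.2.1 ^ 2 - 4 * v.1 * v.2.2) ^ ((k : ℝ) - 1 / 2) : ℝ) : ℂ)
      * (((v.1 * ‖z‖ ^ 2 + v.2.1 * z.re + v.2.2) / z.im : ℝ) : ℂ)
      / ((v.1 : ℂ) * z ^ 2 + (v.2.1 : ℂ) * z + (v.2.2 : ℂ)) ^ (k + 1)
  else 0

/-- Partial derivative in the first coordinate `a`. -/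
noncomputable def pda (f : ℝ × ℝ × ℝ → ℂ) (v : ℝ × ℝ × ℝ) : ℂ :=
  deriv (fun t : ℝ => f (t, v.2.1, v.2.2)) v.1

/-- Partial derivative in the second coordinate `b`. -/
noncomputable def pdb (f : ℝ × ℝ × ℝ → ℂ) (v : ℝ × ℝ × ℝ) : ℂ :=
  deriv (fun t : ℝ => f (v.1, t, v.2.2)) v.2.1

/-- Partial derivative in the third coordinate `c`. -/
noncomputable def pdc (f : ℝ × ℝ × ℝ → ℂ) (v : ℝ × ℝ × ℝ) : ℂ :=
  deriv (fun t : ℝ => f (v.1, v.2.1, t)) v.2.2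

/-! ### Auxiliary definitions -/

def Qq (a b c : ℝ) : ℝ := b ^ 2 - 4 * a * c

noncomputable def Dd (z : ℂ) (a b c : ℝ) : ℂ := (a : ℂ) * z ^ 2 + (b : ℂ) * z + (c : ℂ)

noncomputable def Nn (z : ℂ) (a b c : ℝ) : ℝ :=
  (a * ‖z‖ ^ 2 + b * z.re + c) / z.im

lemma pVig_eq (k : ℕ) (z : ℂ) (a b c : ℝ) (h : 0 < Qq a b c) :
    pVig k z (a, b, c)
      = ((Qq a b c ^ ((k : ℝ) - 1 / 2) : ℝ) : ℂ) * ((Nn z a b c : ℝ) : ℂ)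
          / Dd z a b c ^ (k + 1) := by
  unfold pVig Qq Dd Nn at *
  rw [if_pos h]

lemma Dd_ne (z : ℂ) (hz : 0 < z.im) (a b c : ℝ) (h : 0 < Qq a b c) :
    Dd z a b c ≠ 0 := by
  intro h0
  have hre : (Dd z a b c).re = 0 := by rw [h0]; simp
  have him : (Dd z a b c).im = 0 := by rw [h0]; simp
  simp only [Dd, Complex.add_re, Complex.add_im, Complex.mul_re, Complex.mul_im,
    Complex.ofReal_re, Complex.ofReal_im, pow_two, Complex.mul_re, Complex.mul_im] at hre him
  have h2 : z.im * (2 * a * z.re + b) = 0 := by linear_combination him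
  have key : 2 * a * z.re + b = 0 := by
    rcases mul_eq_zero.mp h2 with h' | h'
    · exact absurd h' hz.ne'
    · exact h'
  have hb : b = -(2 * a * z.re) := by linarith
  have hc : c = a * z.re ^ 2 + a * z.im ^ 2 := by linear_combination hre - z.re * key
  have hQval : Qq a b c = -(4 * (a * z.im) ^ 2) := by
    simp only [Qq]; rw [hb, hc]; ring
  nlinarith [sq_nonneg (a * z.im), h, hQval]

/-! ### Master differentiation lemma -/

lemma powLine {d : ℝ → ℂ} {d' : ℂ} {t : ℝ} (hd : HasDerivAt d d' t) (m : ℕ) :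
    HasDerivAt (fun s => d s ^ (m + 1)) (((m : ℂ) + 1) * d t ^ m * d') t := by
  induction m with
  | zero => simpa using hd
  | succ i ih =>
    have h : HasDerivAt (fun s => d s ^ (i + 1) * d s) _ t := ih.mul hd
    have hfun : (fun s => d s ^ (i + 1) * d s) = fun s => d s ^ (i + 1 + 1) := by
      funext s; rw [← pow_succ]
    rw [hfun] at h
    convert h using 1
    push_cast
    ring

lemma master {q : ℝ → ℝ} {n d : ℝ → ℂ} {q' : ℝ} {n' d' : ℂ} {t ρ : ℝ} (m : ℕ)
    (hq : HasDerivAt q q' t) (hn : HasDerivAt n n' t) (hd : HasDerivAt d d' t)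
    (h0 : 0 < q t) (h1 : d t ≠ 0) :
    HasDerivAt (fun s => ((q s ^ ρ : ℝ) : ℂ) * n s / d s ^ (m + 1))
      (((q t ^ (ρ - 1) : ℝ) : ℂ) *
          (((ρ : ℝ) : ℂ) * ((q' : ℝ) : ℂ) * n t * d t + ((q t : ℝ) : ℂ) * n' * d t
            - ((m : ℂ) + 1) * ((q t : ℝ) : ℂ) * n t * d') / d t ^ (m + 2)) t := by
  have hq1 : HasDerivAt (fun s => q s ^ ρ) (ρ * q t ^ (ρ - 1) * q') t := by
    have h := (Real.hasDerivAt_rpow_const (x := q t) (p := ρ) (Or.inl h0.ne')).comp t hq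
    simpa [mul_assoc, Function.comp_def] using h
  have hq2 : HasDerivAt (fun s => ((q s ^ ρ : ℝ) : ℂ))
      ((ρ * q t ^ (ρ - 1) * q' : ℝ) : ℂ) t := hq1.ofReal_comp
  have hnum := hq2.mul hn
  have hden := powLine hd m
  have hdiv := hnum.div hden (pow_ne_zero _ h1)
  have hval : ((q t ^ (ρ - 1) : ℝ) : ℂ) *
          (((ρ : ℝ) : ℂ) * ((q' : ℝ) : ℂ) * n t * d t + ((q t : ℝ) : ℂ) * n' * d t
            - ((m : ℂ) + 1) * ((q t : ℝ) : ℂ) * n t * d') / d t ^ (m + 2)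
      = ((((ρ * q t ^ (ρ - 1) * q' : ℝ) : ℂ) * n t + ((q t ^ ρ : ℝ) : ℂ) * n') * d t ^ (m + 1)
          - ((q t ^ ρ : ℝ) : ℂ) * n t * (((m : ℂ) + 1) * d t ^ m * d')) / (d t ^ (m + 1)) ^ 2 := by
    have e := Real.rpow_add_one h0.ne' (ρ - 1)
    rw [show ρ - 1 + 1 = ρ by ring] at e
    rw [div_eq_div_iff (pow_ne_zero _ h1) (pow_ne_zero _ (pow_ne_zero _ h1))]
    rw [e]
    push_cast
    ring
  rw [hval]
  exact hdiv

/-! ### Line derivatives -/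

lemma lineQa (a b c : ℝ) : HasDerivAt (fun t => Qq t b c) (-(4 * c)) a := by
  have h := (((hasDerivAt_id a).const_mul (4 : ℝ)).mul_const c).const_sub (b ^ 2)
  simpa [Qq] using h

lemma lineQb (a b c : ℝ) : HasDerivAt (fun t => Qq a t c) (2 * b) b := by
  have h := (hasDerivAt_pow 2 b).sub_const (4 * a * c)
  simpa [Qq] using h

lemma lineQc (a b c : ℝ) : HasDerivAt (fun t => Qq a b t) (-(4 * a)) c := by
  have h := (((hasDerivAt_id c).const_mul (4 : ℝ)).mul_const a).const_sub (b ^ 2)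
  have h2 : HasDerivAt (fun t : ℝ => b ^ 2 - 4 * t * a) (-(4 * a)) c := by simpa using h
  have hfun : (fun t : ℝ => b ^ 2 - 4 * t * a) = fun t => Qq a b t := by
    funext t; simp [Qq]; ring
  rwa [hfun] at h2

lemma lineNa (z : ℂ) (a b c : ℝ) :
    HasDerivAt (fun t => Nn z t b c) (‖z‖ ^ 2 / z.im) a := by
  have h := ((((hasDerivAt_id a).mul_const (‖z‖ ^ 2)).add_const
    (b * z.re)).add_const c).div_const z.im
  simpa [Nn] using h

lemma lineNb (z : ℂ) (a b c : ℝ) :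
    HasDerivAt (fun t => Nn z a t c) (z.re / z.im) b := by
  have h := ((((hasDerivAt_id b).mul_const z.re).const_add
    (a * ‖z‖ ^ 2)).add_const c).div_const z.im
  simpa [Nn] using h

lemma lineNc (z : ℂ) (a b c : ℝ) :
    HasDerivAt (fun t => Nn z a b t) (1 / z.im) c := by
  have h := ((hasDerivAt_id c).const_add
    (a * ‖z‖ ^ 2 + b * z.re)).div_const z.im
  simpa [Nn] using h

lemma lineOfReal (x : ℝ) : HasDerivAt (fun t : ℝ => (t : ℂ)) 1 x := by
  simpa using (hasDerivAt_id ((x : ℝ) : ℂ)).comp_ofReal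

lemma lineDa (z : ℂ) (a b c : ℝ) :
    HasDerivAt (fun t => Dd z t b c) (z ^ 2) a := by
  have h := (((lineOfReal a).mul_const (z ^ 2)).add_const ((b : ℂ) * z)).add_const (c : ℂ)
  simpa [Dd] using h

lemma lineDb (z : ℂ) (a b c : ℝ) :
    HasDerivAt (fun t => Dd z a t c) z b := by
  have h := ((((lineOfReal b).mul_const z).const_add ((a : ℂ) * z ^ 2)).add_const (c : ℂ))
  simpa [Dd] using h

lemma lineDc (z : ℂ) (a b c : ℝ) :
    HasDerivAt (fun t => Dd z a b t) 1 c := by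
  have h := (lineOfReal c).const_add ((a : ℂ) * z ^ 2 + (b : ℂ) * z)
  simpa [Dd] using h

/-! ### Eventual positivity -/

lemma ev_pos_a {a b c : ℝ} (h : 0 < Qq a b c) : ∀ᶠ t in nhds a, 0 < Qq t b c := by
  have hc : Continuous fun t : ℝ => Qq t b c := by unfold Qq; continuity
  exact (hc.tendsto a).eventually (eventually_gt_nhds h)

lemma ev_pos_b {a b c : ℝ} (h : 0 < Qq a b c) : ∀ᶠ t in nhds b, 0 < Qq a t c := by
  have hc : Continuous fun t : ℝ => Qq a t c := by unfold Qq; continuity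
  exact (hc.tendsto b).eventually (eventually_gt_nhds h)

lemma ev_pos_c {a b c : ℝ} (h : 0 < Qq a b c) : ∀ᶠ t in nhds c, 0 < Qq a b t := by
  have hc : Continuous fun t : ℝ => Qq a b t := by unfold Qq; continuity
  exact (hc.tendsto c).eventually (eventually_gt_nhds h)

/-! ### First derivative numerators -/

noncomputable def GA (k : ℕ) (z : ℂ) (a b c : ℝ) : ℂ :=
  (((k : ℝ) - 1 / 2 : ℝ) : ℂ) * ((-(4 * c) : ℝ) : ℂ) * ((Nn z a b c : ℝ) : ℂ) * Dd z a b c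
    + ((Qq a b c : ℝ) : ℂ) * ((‖z‖ ^ 2 / z.im : ℝ) : ℂ) * Dd z a b c
    - ((k : ℂ) + 1) * ((Qq a b c : ℝ) : ℂ) * ((Nn z a b c : ℝ) : ℂ) * z ^ 2

noncomputable def GB (k : ℕ) (z : ℂ) (a b c : ℝ) : ℂ :=
  (((k : ℝ) - 1 / 2 : ℝ) : ℂ) * ((2 * b : ℝ) : ℂ) * ((Nn z a b c : ℝ) : ℂ) * Dd z a b c
    + ((Qq a b c : ℝ) : ℂ) * ((z.re / z.im : ℝ) : ℂ) * Dd z a b c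
    - ((k : ℂ) + 1) * ((Qq a b c : ℝ) : ℂ) * ((Nn z a b c : ℝ) : ℂ) * z

noncomputable def GC (k : ℕ) (z : ℂ) (a b c : ℝ) : ℂ :=
  (((k : ℝ) - 1 / 2 : ℝ) : ℂ) * ((-(4 * a) : ℝ) : ℂ) * ((Nn z a b c : ℝ) : ℂ) * Dd z a b c
    + ((Qq a b c : ℝ) : ℂ) * ((1 / z.im : ℝ) : ℂ) * Dd z a b c
    - ((k : ℂ) + 1) * ((Qq a b c : ℝ) : ℂ) * ((Nn z a b c : ℝ) : ℂ) * 1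

/-! ### First derivative formulas -/

lemma pda_eq (k : ℕ) (z : ℂ) (hz : 0 < z.im) (a b c : ℝ) (h : 0 < Qq a b c) :
    pda (pVig k z) (a, b, c)
      = ((Qq a b c ^ ((k : ℝ) - 1 / 2 - 1) : ℝ) : ℂ) * GA k z a b c
          / Dd z a b c ^ (k + 2) := by
  have hev : (fun t : ℝ => pVig k z (t, b, c)) =ᶠ[nhds a]
      fun t => ((Qq t b c ^ ((k : ℝ) - 1 / 2) : ℝ) : ℂ) * ((Nn z t b c : ℝ) : ℂ)
        / Dd z t b c ^ (k + 1) := by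
    filter_upwards [ev_pos_a h] with t ht
    exact pVig_eq k z t b c ht
  show deriv (fun t : ℝ => pVig k z (t, b, c)) a = _
  exact hev.deriv_eq.trans (master k (lineQa a b c) (lineNa z a b c).ofReal_comp
    (lineDa z a b c) h (Dd_ne z hz a b c h)).deriv

lemma pdb_eq (k : ℕ) (z : ℂ) (hz : 0 < z.im) (a b c : ℝ) (h : 0 < Qq a b c) :
    pdb (pVig k z) (a, b, c)
      = ((Qq a b c ^ ((k : ℝ) - 1 / 2 - 1) : ℝ) : ℂ) * GB k z a b c
          / Dd z a b c ^ (k + 2) := by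
  have hev : (fun t : ℝ => pVig k z (a, t, c)) =ᶠ[nhds b]
      fun t => ((Qq a t c ^ ((k : ℝ) - 1 / 2) : ℝ) : ℂ) * ((Nn z a t c : ℝ) : ℂ)
        / Dd z a t c ^ (k + 1) := by
    filter_upwards [ev_pos_b h] with t ht
    exact pVig_eq k z a t c ht
  show deriv (fun t : ℝ => pVig k z (a, t, c)) b = _
  exact hev.deriv_eq.trans (master k (lineQb a b c) (lineNb z a b c).ofReal_comp
    (lineDb z a b c) h (Dd_ne z hz a b c h)).deriv

lemma pdc_eq (k : ℕ) (z : ℂ) (hz : 0 < z.im) (a b c : ℝ) (h : 0 < Qq a b c) :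
    pdc (pVig k z) (a, b, c)
      = ((Qq a b c ^ ((k : ℝ) - 1 / 2 - 1) : ℝ) : ℂ) * GC k z a b c
          / Dd z a b c ^ (k + 2) := by
  have hev : (fun t : ℝ => pVig k z (a, b, t)) =ᶠ[nhds c]
      fun t => ((Qq a b t ^ ((k : ℝ) - 1 / 2) : ℝ) : ℂ) * ((Nn z a b t : ℝ) : ℂ)
        / Dd z a b t ^ (k + 1) := by
    filter_upwards [ev_pos_c h] with t ht
    exact pVig_eq k z a b t ht
  show deriv (fun t : ℝ => pVig k z (a, b, t)) c = _
  exact hev.deriv_eq.trans (master k (lineQc a b c) (lineNc z a b c).ofReal_comp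
    (lineDc z a b c) h (Dd_ne z hz a b c h)).deriv

set_option maxHeartbeats 1600000 in
theorem stmt14 (k : ℕ) (hk : 2 < k) (hkeven : Even k) (z : ℂ) (hz : 0 < z.im)
    (v : ℝ × ℝ × ℝ) (hd : 0 < v.2.1 ^ 2 - 4 * v.1 * v.2.2) :
    (v.1 : ℂ) * pda (pVig k z) v + (v.2.1 : ℂ) * pdb (pVig k z) v
        + (v.2.2 : ℂ) * pdc (pVig k z) v
      - (1 / (4 * (Real.pi : ℂ))) *
          (-(1 / 2 : ℂ) * pda (pdc (pVig k z)) v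
            + (1 / 2 : ℂ) * pdb (pdb (pVig k z)) v)
    = ((k : ℂ) - 1) * pVig k z v := by
  obtain ⟨a, b, c⟩ := v
  dsimp only at hd ⊢
  have hQ : 0 < Qq a b c := hd
  have hDne : Dd z a b c ≠ 0 := Dd_ne z hz a b c hQ
  have hyC : ((z.im : ℝ) : ℂ) ≠ 0 := Complex.ofReal_ne_zero.mpr hz.ne'
  have hx : ((z.re : ℝ) : ℂ) = (z + (starRingEnd ℂ) z) / 2 := by
    rw [Complex.add_conj]; push_cast; ring
  have hw : ((‖z‖ : ℝ) : ℂ) ^ 2 = z * (starRingEnd ℂ) z := by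
    rw [Complex.mul_conj, ← Complex.sq_norm]; push_cast; ring
  -- second derivative in a of pdc
  have hev4 : (fun t : ℝ => pdc (pVig k z) (t, b, c)) =ᶠ[nhds a]
      fun t => ((Qq t b c ^ ((k : ℝ) - 1 / 2 - 1) : ℝ) : ℂ) * GC k z t b c
        / Dd z t b c ^ (k + 2) := by
    filter_upwards [ev_pos_a hQ] with t ht
    exact pdc_eq k z hz t b c ht
  have hm4r : HasDerivAt (fun t : ℝ => -(4 * t)) (-4 : ℝ) a := by
    simpa [Pi.neg_def] using (((hasDerivAt_id a).const_mul (4 : ℝ)).neg)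
  have hm4 := hm4r.ofReal_comp
  have hNaC := (lineNa z a b c).ofReal_comp
  have hQaC := (lineQa a b c).ofReal_comp
  have hGCa := ((((hm4.const_mul (((k : ℝ) - 1 / 2 : ℝ) : ℂ)).mul hNaC).mul
      (lineDa z a b c)).add
      ((hQaC.mul_const ((1 / z.im : ℝ) : ℂ)).mul (lineDa z a b c))).sub
      (((hQaC.const_mul ((k : ℂ) + 1)).mul hNaC).mul_const (1 : ℂ))
  have L := hev4.deriv_eq.trans
    (master (k + 1) (lineQa a b c) hGCa (lineDa z a b c) hQ hDne).deriv
  -- second derivative in b of pdb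
  have hev5 : (fun t : ℝ => pdb (pVig k z) (a, t, c)) =ᶠ[nhds b]
      fun t => ((Qq a t c ^ ((k : ℝ) - 1 / 2 - 1) : ℝ) : ℂ) * GB k z a t c
        / Dd z a t c ^ (k + 2) := by
    filter_upwards [ev_pos_b hQ] with t ht
    exact pdb_eq k z hz a t c ht
  have hm5r : HasDerivAt (fun t : ℝ => 2 * t) (2 : ℝ) b := by
    simpa using ((hasDerivAt_id b).const_mul (2 : ℝ))
  have hm5 := hm5r.ofReal_comp
  have hNbC := (lineNb z a b c).ofReal_comp
  have hQbC := (lineQb a b c).ofReal_comp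
  have hGBb := ((((hm5.const_mul (((k : ℝ) - 1 / 2 : ℝ) : ℂ)).mul hNbC).mul
      (lineDb z a b c)).add
      ((hQbC.mul_const ((z.re / z.im : ℝ) : ℂ)).mul (lineDb z a b c))).sub
      (((hQbC.const_mul ((k : ℂ) + 1)).mul hNbC).mul_const z)
  have R := hev5.deriv_eq.trans
    (master (k + 1) (lineQb a b c) hGBb (lineDb z a b c) hQ hDne).deriv
  have e45 : pda (pdc (pVig k z)) (a, b, c) = pdb (pdb (pVig k z)) (a, b, c) := by
    show deriv (fun t : ℝ => pdc (pVig k z) (t, b, c)) a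
        = deriv (fun t : ℝ => pdb (pVig k z) (a, t, c)) b
    rw [L, R]
    congr 1
    congr 1
    simp only [GC, GB, Qq, Nn, Dd, Pi.mul_apply, Pi.add_apply, Pi.sub_apply]
    push_cast
    rw [hx, hw]
    ring
  rw [e45]
  rw [show -(1 / 2 : ℂ) * pdb (pdb (pVig k z)) (a, b, c)
      + (1 / 2 : ℂ) * pdb (pdb (pVig k z)) (a, b, c) = 0 by ring, mul_zero, sub_zero]
  rw [pda_eq k z hz a b c hQ, pdb_eq k z hz a b c hQ, pdc_eq k z hz a b c hQ,
    pVig_eq k z a b c hQ]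
  have hEuler : (a : ℂ) * GA k z a b c + (b : ℂ) * GB k z a b c + (c : ℂ) * GC k z a b c
      = ((k : ℂ) - 1) * ((Qq a b c : ℝ) : ℂ) * ((Nn z a b c : ℝ) : ℂ) * Dd z a b c := by
    simp only [GA, GB, GC, Qq, Nn, Dd]
    push_cast
    ring
  have hsplit : ((Qq a b c ^ ((k : ℝ) - 1 / 2) : ℝ) : ℂ)
      = ((Qq a b c ^ ((k : ℝ) - 1 / 2 - 1) : ℝ) : ℂ) * ((Qq a b c : ℝ) : ℂ) := by
    rw [← Complex.ofReal_mul]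
    congr 1
    have e := Real.rpow_add_one hQ.ne' ((k : ℝ) - 1 / 2 - 1)
    rw [show (k : ℝ) - 1 / 2 - 1 + 1 = (k : ℝ) - 1 / 2 by ring] at e
    exact e
  rw [hsplit]
  calc (a : ℂ) * (((Qq a b c ^ ((k : ℝ) - 1 / 2 - 1) : ℝ) : ℂ) * GA k z a b c
          / Dd z a b c ^ (k + 2))
        + (b : ℂ) * (((Qq a b c ^ ((k : ℝ) - 1 / 2 - 1) : ℝ) : ℂ) * GB k z a b c
          / Dd z a b c ^ (k + 2))
        + (c : ℂ) * (((Qq a b c ^ ((k : ℝ) - 1 / 2 - 1) : ℝ) : ℂ) * GC k z a b c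
          / Dd z a b c ^ (k + 2))
      = ((Qq a b c ^ ((k : ℝ) - 1 / 2 - 1) : ℝ) : ℂ)
          * ((a : ℂ) * GA k z a b c + (b : ℂ) * GB k z a b c + (c : ℂ) * GC k z a b c)
          / Dd z a b c ^ (k + 2) := by ring
    _ = ((Qq a b c ^ ((k : ℝ) - 1 / 2 - 1) : ℝ) : ℂ)
          * (((k : ℂ) - 1) * ((Qq a b c : ℝ) : ℂ) * ((Nn z a b c : ℝ) : ℂ) * Dd z a b c)
          / Dd z a b c ^ (k + 2) := by rw [hEuler]
    _ = ((k : ℂ) - 1) * (((Qq a b c ^ ((k : ℝ) - 1 / 2 - 1) : ℝ) : ℂ) * ((Qq a b c : ℝ) : ℂ)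
          * ((Nn z a b c : ℝ) : ℂ) / Dd z a b c ^ (k + 1)) := by
        rw [pow_succ]
        field_simp
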